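/- Let F, G : ℝ → ℝ be increasing homeomorphisms with F(x+1) = F(x) + d_F, G(x+1) = G(x) + d_G (integers d_F, d_G ≥ 2) and F(0) = G(0) = 0. Define ι_{n,F} = max{F⁻ⁿ(m+1) − F⁻ⁿ(m) : m ∈ ℤ, 0 ≤ m < d_F^n} and similarly ι_{n,G}. Assume ι_{n,F} → 0 and ι_{n,G} → 0 as n → ∞. Then there exists an increasing homeomorphism H : ℝ → ℝ with H(x+1) = H(x) + 1 and F ∘ H = H ∘ G if and only if d_F = d_G. -/

import Mathlib

/-- `Finv F n` is the inverse of the `n`-th iterate `F^[n]`. -/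
noncomputable def Finv (F : ℝ → ℝ) (n : ℕ) : ℝ → ℝ := Function.invFun (F^[n])

open Filter Topology

namespace CEaux

variable {d : ℕ} {F G : ℝ → ℝ}

lemma Finv_left (hbij : Function.Bijective F) (n : ℕ) (x : ℝ) :
    Finv F n (F^[n] x) = x :=
  Function.leftInverse_invFun (hbij.iterate n).1 x

lemma Finv_right (hbij : Function.Bijective F) (n : ℕ) (x : ℝ) :
    F^[n] (Finv F n x) = x :=
  Function.rightInverse_invFun (hbij.iterate n).2 x

lemma Finv_strictMono (hmono : StrictMono F) (hbij : Function.Bijective F) (n : ℕ) :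
    StrictMono (Finv F n) := by
  intro a b hab
  by_contra h
  push_neg at h
  have := (hmono.iterate n).monotone h
  rw [Finv_right hbij n a, Finv_right hbij n b] at this
  linarith

lemma map_add_int (hdeg : ∀ x : ℝ, F (x + 1) = F x + d) (x : ℝ) (k : ℤ) :
    F (x + k) = F x + (d : ℝ) * k := by
  induction k using Int.induction_on with
  | zero => simp
  | succ n ih =>
      have h2 := hdeg (x + ((n : ℤ) : ℝ))
      rw [ih] at h2
      have h1 : x + (((n : ℤ) + 1 : ℤ) : ℝ) = (x + ((n : ℤ) : ℝ)) + 1 := by push_cast; ring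
      rw [h1, h2]; push_cast; ring
  | pred n ih =>
      have h1 : (x + (-(n : ℤ) - 1 : ℤ)) + 1 = x + (-(n:ℤ) : ℤ) := by push_cast; ring
      have h2 := hdeg (x + (-(n : ℤ) - 1 : ℤ))
      rw [h1, ih] at h2
      push_cast at h2 ⊢
      linarith

lemma map_int (hdeg : ∀ x : ℝ, F (x + 1) = F x + d) (h0 : F 0 = 0) (k : ℤ) :
    F (k : ℝ) = (d : ℝ) * k := by
  have := map_add_int hdeg 0 k
  simpa [h0] using this

lemma iter_map_add_int (hdeg : ∀ x : ℝ, F (x + 1) = F x + d) (n : ℕ) (x : ℝ) (k : ℤ) :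
    F^[n] (x + k) = F^[n] x + ((d : ℝ)) ^ n * k := by
  induction n with
  | zero => simp
  | succ n ih =>
      rw [Function.iterate_succ_apply', Function.iterate_succ_apply', ih]
      have h1 : F^[n] x + (d : ℝ) ^ n * k = F^[n] x + ((d ^ n * k : ℤ) : ℝ) := by push_cast; ring
      rw [h1, map_add_int hdeg]
      push_cast; ring

lemma iter_zero (h0 : F 0 = 0) (n : ℕ) : F^[n] 0 = 0 := by
  induction n with
  | zero => simp
  | succ n ih => rw [Function.iterate_succ_apply', ih, h0]

lemma iter_int (hdeg : ∀ x : ℝ, F (x + 1) = F x + d) (h0 : F 0 = 0) (n : ℕ) (k : ℤ) :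
    F^[n] (k : ℝ) = (d : ℝ) ^ n * k := by
  have := iter_map_add_int hdeg n 0 k
  simpa [iter_zero h0 n] using this

lemma Finv_add_int (hbij : Function.Bijective F) (hdeg : ∀ x : ℝ, F (x + 1) = F x + d)
    (n : ℕ) (x : ℝ) (k : ℤ) :
    Finv F n (x + (d : ℝ) ^ n * k) = Finv F n x + k := by
  apply (hbij.iterate n).1
  rw [Finv_right hbij, iter_map_add_int hdeg, Finv_right hbij]

lemma Finv_refine (hbij : Function.Bijective F) (hdeg : ∀ x : ℝ, F (x + 1) = F x + d)
    (h0 : F 0 = 0) (n j : ℕ) (m : ℤ) :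
    Finv F (n + j) ((d : ℝ) ^ j * m) = Finv F n (m : ℝ) := by
  have h1 : F^[n + j] (Finv F n (m : ℝ)) = (d : ℝ) ^ j * m := by
    rw [add_comm, Function.iterate_add_apply, Finv_right hbij, iter_int hdeg h0]
  rw [← h1, Finv_left hbij]

lemma F_Finv_succ (hbij : Function.Bijective F) (n : ℕ) (y : ℝ) :
    F (Finv F (n + 1) y) = Finv F n y := by
  have h1 : F^[n] (F (Finv F (n + 1) y)) = y := by
    rw [← Function.iterate_succ_apply, Finv_right hbij]
  conv_rhs => rw [← h1, Finv_left hbij]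

/-- mesh bound for all integers, from the bound for `0 ≤ m < d^n`. -/
lemma mesh_int (hd : 2 ≤ d) (hbij : Function.Bijective F)
    (hdeg : ∀ x : ℝ, F (x + 1) = F x + d)
    (hι : ∀ ε : ℝ, 0 < ε → ∃ N : ℕ, ∀ n ≥ N, ∀ m : ℕ, m < d ^ n →
      Finv F n ((m : ℝ) + 1) - Finv F n (m : ℝ) < ε) :
    ∀ ε : ℝ, 0 < ε → ∃ N : ℕ, ∀ n ≥ N, ∀ m : ℤ,
      Finv F n ((m : ℝ) + 1) - Finv F n (m : ℝ) < ε := by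
  intro ε hε
  obtain ⟨N, hN⟩ := hι ε hε
  refine ⟨N, fun n hn m => ?_⟩
  have hdn : (0 : ℤ) < (d : ℤ) ^ n := by positivity
  set q : ℤ := m / (d : ℤ) ^ n with hq
  set r : ℤ := m % (d : ℤ) ^ n with hr
  have hr0 : 0 ≤ r := Int.emod_nonneg m (by positivity)
  have hrlt : r < (d : ℤ) ^ n := Int.emod_lt_of_pos m hdn
  have hm : m = (d : ℤ) ^ n * q + r := (Int.mul_ediv_add_emod m _).symm
  have hcast : (m : ℝ) = (r : ℝ) + (d : ℝ) ^ n * q := by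
    rw [hm]; push_cast; ring
  have hcast1 : (m : ℝ) + 1 = ((r : ℝ) + 1) + (d : ℝ) ^ n * q := by
    rw [hcast]; ring
  rw [hcast1, hcast, Finv_add_int hbij hdeg, Finv_add_int hbij hdeg]
  have hkey := hN n hn r.toNat (by
    have : (r.toNat : ℤ) < (d : ℤ) ^ n := by rwa [Int.toNat_of_nonneg hr0]
    exact_mod_cast this)
  have hc : ((r.toNat : ℕ) : ℝ) = (r : ℝ) := by
    rw [← Int.cast_natCast, Int.toNat_of_nonneg hr0]
  rw [hc] at hkey
  linarith

lemma key_mem (hFmono : StrictMono F) (hFbij : Function.Bijective F)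
    (hFdeg : ∀ x : ℝ, F (x + 1) = F x + d) (hF0 : F 0 = 0)
    (hGmono : StrictMono G)
    (hGdeg : ∀ x : ℝ, G (x + 1) = G x + d) (hG0 : G 0 = 0)
    (n k : ℕ) (hnk : n ≤ k) (x : ℝ) (m : ℤ)
    (h1 : (m : ℝ) ≤ G^[n] x) (h2 : G^[n] x ≤ (m : ℝ) + 1) :
    Finv F n (m : ℝ) ≤ Finv F k (G^[k] x) ∧
      Finv F k (G^[k] x) ≤ Finv F n ((m : ℝ) + 1) := by
  obtain ⟨j, rfl⟩ := Nat.exists_eq_add_of_le hnk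
  have hGk : G^[n + j] x = G^[j] (G^[n] x) := by
    rw [add_comm, Function.iterate_add_apply]
  have hlow : (d : ℝ) ^ j * m ≤ G^[n + j] x := by
    rw [hGk, ← iter_int hGdeg hG0 j m]
    exact (hGmono.iterate j).monotone h1
  have hhigh : G^[n + j] x ≤ (d : ℝ) ^ j * ((m + 1 : ℤ) : ℝ) := by
    rw [hGk, ← iter_int hGdeg hG0 j (m + 1)]
    apply (hGmono.iterate j).monotone
    push_cast; linarith
  constructor
  · rw [← Finv_refine hFbij hFdeg hF0 n j m]
    exact (Finv_strictMono hFmono hFbij (n + j)).monotone hlow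
  · have e : ((m : ℝ) + 1) = (((m + 1 : ℤ)) : ℝ) := by push_cast; ring
    rw [e, ← Finv_refine hFbij hFdeg hF0 n j (m + 1)]
    exact (Finv_strictMono hFmono hFbij (n + j)).monotone hhigh

end CEaux

/-- two circle endomorphisms whose Markov partitions have mesh
tending to zero are topologically conjugate if and only if their degrees
agree. -/
theorem stmt_5 (dF dG : ℕ) (hdF : 2 ≤ dF) (hdG : 2 ≤ dG) (F G : ℝ → ℝ)
    (hFmono : StrictMono F) (hFbij : Function.Bijective F)
    (hFdeg : ∀ x : ℝ, F (x + 1) = F x + dF) (hF0 : F 0 = 0)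
    (hGmono : StrictMono G) (hGbij : Function.Bijective G)
    (hGdeg : ∀ x : ℝ, G (x + 1) = G x + dG) (hG0 : G 0 = 0)
    (hιF : ∀ ε : ℝ, 0 < ε → ∃ N : ℕ, ∀ n ≥ N, ∀ m : ℕ, m < dF ^ n →
      Finv F n ((m : ℝ) + 1) - Finv F n (m : ℝ) < ε)
    (hιG : ∀ ε : ℝ, 0 < ε → ∃ N : ℕ, ∀ n ≥ N, ∀ m : ℕ, m < dG ^ n →
      Finv G n ((m : ℝ) + 1) - Finv G n (m : ℝ) < ε) :
    (∃ H : ℝ → ℝ, StrictMono H ∧ Function.Bijective H ∧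
      (∀ x : ℝ, H (x + 1) = H x + 1) ∧ ∀ x : ℝ, F (H x) = H (G x)) ↔ dF = dG := by
  constructor
  · rintro ⟨H, hHmono, hHbij, hHper, hHconj⟩
    have hHnat : ∀ (y : ℝ) (k : ℕ), H (y + k) = H y + k := by
      intro y k
      induction k with
      | zero => simp
      | succ k ih =>
          have := hHper (y + k)
          push_cast
          rw [show y + ((k : ℝ) + 1) = (y + k) + 1 by ring, this, ih]
          ring
    have h1 : H (1 : ℝ) = H 0 + 1 := by simpa using hHper 0
    have hG1 : G 1 = (dG : ℝ) := by simpa [hG0] using hGdeg 0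
    have hF0' : F (H 0) = H 0 := by rw [hHconj 0, hG0]
    have key : F (H 1) = H (G 1) := hHconj 1
    rw [h1, hG1, hFdeg, hF0'] at key
    have h2 : H ((dG : ℝ)) = H 0 + dG := by simpa using hHnat 0 dG
    rw [h2] at key
    have : (dF : ℝ) = (dG : ℝ) := by linarith
    exact_mod_cast this
  · intro hd
    subst hd
    have meshF := CEaux.mesh_int hdF hFbij hFdeg hιF
    have meshG := CEaux.mesh_int hdF hGbij hGdeg hιG
    set h : ℕ → ℝ → ℝ := fun n x => Finv F n (G^[n] x) with hh
    have hmem : ∀ (n k : ℕ), n ≤ k → ∀ x : ℝ,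
        Finv F n ((⌊G^[n] x⌋ : ℝ)) ≤ h k x ∧ h k x ≤ Finv F n ((⌊G^[n] x⌋ : ℝ) + 1) :=
      fun n k hnk x =>
        CEaux.key_mem hFmono hFbij hFdeg hF0 hGmono hGdeg hG0 n k hnk x ⌊G^[n] x⌋
          (Int.floor_le _) (Int.lt_floor_add_one _).le
    have hcauchy : ∀ x : ℝ, CauchySeq (fun n => h n x) := by
      intro x
      rw [Metric.cauchySeq_iff]
      intro ε hε
      obtain ⟨N, hN⟩ := meshF ε hε
      refine ⟨N, fun j hj k hk => ?_⟩
      obtain ⟨a1, a2⟩ := hmem N j hj x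
      obtain ⟨b1, b2⟩ := hmem N k hk x
      have hw := hN N le_rfl ⌊G^[N] x⌋
      rw [Real.dist_eq, abs_sub_lt_iff]
      constructor <;> linarith
    have hex : ∀ x : ℝ, ∃ L, Filter.Tendsto (fun n => h n x) Filter.atTop (nhds L) :=
      fun x => cauchySeq_tendsto_of_complete (hcauchy x)
    set H : ℝ → ℝ := fun x => (hex x).choose with hHdef
    have hHt : ∀ x, Filter.Tendsto (fun n => h n x) Filter.atTop (nhds (H x)) :=
      fun x => (hex x).choose_spec
    have hHmono : Monotone H := by
      intro x y hxy
      refine le_of_tendsto_of_tendsto' (hHt x) (hHt y) (fun n => ?_)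
      exact (CEaux.Finv_strictMono hFmono hFbij n).monotone ((hGmono.iterate n).monotone hxy)
    have hHper : ∀ x : ℝ, H (x + 1) = H x + 1 := by
      intro x
      have e : ∀ n, h n (x + 1) = h n x + 1 := by
        intro n
        show Finv F n (G^[n] (x + 1)) = Finv F n (G^[n] x) + 1
        have e1 := CEaux.iter_map_add_int hGdeg n x 1
        have e2 := CEaux.Finv_add_int hFbij hFdeg n (G^[n] x) 1
        simp only [Int.cast_one, mul_one] at e1 e2
        rw [e1, e2]
      have t1 : Filter.Tendsto (fun n => h n (x + 1)) Filter.atTop (nhds (H x + 1)) := by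
        simp only [e]
        exact (hHt x).add tendsto_const_nhds
      exact tendsto_nhds_unique (hHt (x + 1)) t1
    have hHpart : ∀ (n : ℕ) (m : ℤ), H (Finv G n (m : ℝ)) = Finv F n (m : ℝ) := by
      intro n m
      have hev : ∀ k, n ≤ k → h k (Finv G n (m : ℝ)) = Finv F n (m : ℝ) := by
        intro k hk
        obtain ⟨j, rfl⟩ := Nat.exists_eq_add_of_le hk
        show Finv F (n + j) (G^[n + j] (Finv G n (m : ℝ))) = _
        rw [add_comm n j, Function.iterate_add_apply, CEaux.Finv_right hGbij,
          CEaux.iter_int hGdeg hG0, add_comm j n]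
        exact CEaux.Finv_refine hFbij hFdeg hF0 n j m
      have t1 : Filter.Tendsto (fun k => h k (Finv G n (m : ℝ))) Filter.atTop
          (nhds (Finv F n (m : ℝ))) :=
        Filter.Tendsto.congr' (by
          filter_upwards [Filter.eventually_ge_atTop n] with k hk
          exact (hev k hk).symm) tendsto_const_nhds
      exact tendsto_nhds_unique (hHt _) t1
    have hFcont : Continuous F := by
      have := (StrictMono.orderIsoOfSurjective F hFmono hFbij.2).toHomeomorph.continuous
      simpa using this
    have hHconj : ∀ x : ℝ, F (H x) = H (G x) := by
      intro x
      have t1 : Filter.Tendsto (fun n => F (h (n + 1) x)) Filter.atTop (nhds (F (H x))) :=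
        (hFcont.continuousAt.tendsto).comp ((hHt x).comp (Filter.tendsto_add_atTop_nat 1))
      have t2 : ∀ n : ℕ, F (h (n + 1) x) = h n (G x) := by
        intro n
        show F (Finv F (n + 1) (G^[n + 1] x)) = Finv F n (G^[n] (G x))
        rw [CEaux.F_Finv_succ hFbij, Function.iterate_succ_apply]
      simp only [t2] at t1
      exact tendsto_nhds_unique t1 (hHt (G x))
    have hHsm : StrictMono H := by
      intro x y hxy
      have hhalf : 0 < (y - x) / 2 := by linarith
      obtain ⟨N, hN⟩ := meshG ((y - x) / 2) hhalf
      set m : ℤ := ⌊G^[N] x⌋ + 1 with hm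
      have hp : x < Finv G N (m : ℝ) := by
        have h1 : G^[N] x < (m : ℝ) := by
          rw [hm]; push_cast; exact Int.lt_floor_add_one _
        have h2 := CEaux.Finv_strictMono hGmono hGbij N h1
        rwa [CEaux.Finv_left hGbij] at h2
      have hfl : Finv G N ((⌊G^[N] x⌋ : ℝ)) ≤ x := by
        have h1 : ((⌊G^[N] x⌋ : ℝ)) ≤ G^[N] x := Int.floor_le _
        have h2 := (CEaux.Finv_strictMono hGmono hGbij N).monotone h1
        rwa [CEaux.Finv_left hGbij] at h2
      have hmesh0 := hN N le_rfl ⌊G^[N] x⌋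
      have hmesh1 := hN N le_rfl m
      have hq1 : Finv G N (m : ℝ) ≤ x + (y - x) / 2 := by
        have : (m : ℝ) = (⌊G^[N] x⌋ : ℝ) + 1 := by rw [hm]; push_cast; ring
        rw [this]; linarith
      have hq2 : Finv G N ((m : ℝ) + 1) < y := by linarith
      have e1 : H (Finv G N (m : ℝ)) = Finv F N (m : ℝ) := hHpart N m
      have e2 := hHpart N (m + 1)
      rw [show ((m + 1 : ℤ) : ℝ) = (m : ℝ) + 1 by push_cast; ring] at e2
      have hlt : Finv F N (m : ℝ) < Finv F N ((m : ℝ) + 1) :=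
        CEaux.Finv_strictMono hFmono hFbij N (by linarith)
      have a1 := hHmono hp.le
      have a2 := hHmono hq2.le
      rw [e1] at a1
      rw [e2] at a2
      linarith
    have hHsurj : Function.Surjective H := by
      intro y
      set mseq : ℕ → ℤ := fun n => ⌊F^[n] y⌋ with hmseq
      set a : ℕ → ℝ := fun n => Finv G n ((mseq n : ℝ)) with ha
      set b : ℕ → ℝ := fun n => Finv G n ((mseq n : ℝ) + 1) with hb
      have hyl : ∀ n, (mseq n : ℝ) ≤ F^[n] y := fun n => Int.floor_le _
      have hyu : ∀ n, F^[n] y < (mseq n : ℝ) + 1 := fun n => Int.lt_floor_add_one _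
      have hstep : ∀ n, ((dF : ℤ) * mseq n ≤ mseq (n + 1)) ∧
          (mseq (n + 1) + 1 ≤ (dF : ℤ) * (mseq n + 1)) := by
        intro n
        have h1 : F^[n + 1] y = F (F^[n] y) := Function.iterate_succ_apply' F n y
        have low : (dF : ℝ) * (mseq n : ℝ) ≤ F^[n + 1] y := by
          rw [h1]
          have h2 := hFmono.monotone (hyl n)
          rwa [CEaux.map_int hFdeg hF0] at h2
        have high : F^[n + 1] y < (dF : ℝ) * ((mseq n : ℝ) + 1) := by
          rw [h1]
          have h2 := hFmono (hyu n)
          rw [show ((mseq n : ℝ) + 1) = (((mseq n + 1 : ℤ)) : ℝ) by push_cast; ring,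
            CEaux.map_int hFdeg hF0] at h2
          push_cast at h2 ⊢
          linarith
        constructor
        · have h3 : (((dF : ℤ) * mseq n : ℤ) : ℝ) ≤ F^[n + 1] y := by push_cast; linarith
          exact Int.le_floor.2 h3
        · have h4 : (mseq (n + 1) : ℝ) < (dF : ℝ) * ((mseq n : ℝ) + 1) :=
            lt_of_le_of_lt (hyl (n + 1)) high
          have h5 : mseq (n + 1) < (dF : ℤ) * (mseq n + 1) := by exact_mod_cast h4
          omega
      have hamono : Monotone a := by
        apply monotone_nat_of_le_succ
        intro n
        have h1 := (CEaux.Finv_strictMono hGmono hGbij (n + 1)).monotone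
          (show (((dF : ℤ) * mseq n : ℤ) : ℝ) ≤ ((mseq (n + 1) : ℤ) : ℝ) by
            exact_mod_cast (hstep n).1)
        have h2 : ((((dF : ℤ) * mseq n : ℤ)) : ℝ) = (dF : ℝ) ^ 1 * ((mseq n : ℤ) : ℝ) := by
          push_cast; ring
        rw [h2, CEaux.Finv_refine hGbij hGdeg hG0 n 1 (mseq n)] at h1
        exact h1
      have hbanti : Antitone b := by
        apply antitone_nat_of_succ_le
        intro n
        have h1 := (CEaux.Finv_strictMono hGmono hGbij (n + 1)).monotone
          (show ((mseq (n + 1) : ℝ) + 1) ≤ (((dF : ℤ) * (mseq n + 1) : ℤ) : ℝ) by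
            push_cast
            exact_mod_cast (hstep n).2)
        have h2 : ((((dF : ℤ) * (mseq n + 1) : ℤ)) : ℝ) = (dF : ℝ) ^ 1 * (((mseq n + 1 : ℤ)) : ℝ) := by
          push_cast; ring
        rw [h2, CEaux.Finv_refine hGbij hGdeg hG0 n 1 (mseq n + 1)] at h1
        rw [show (((mseq n + 1 : ℤ)) : ℝ) = (mseq n : ℝ) + 1 by push_cast; ring] at h1
        exact h1
      have hab : ∀ n, a n ≤ b n := fun n =>
        ((CEaux.Finv_strictMono hGmono hGbij n) (by linarith [lt_add_one ((mseq n : ℝ))])).le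
      have hbdd : BddAbove (Set.range a) := by
        refine ⟨b 0, ?_⟩
        rintro z ⟨n, rfl⟩
        exact (hab n).trans (hbanti (Nat.zero_le n))
      set x := ⨆ n, a n with hx
      have hax : Filter.Tendsto a Filter.atTop (nhds x) := tendsto_atTop_ciSup hamono hbdd
      have hxa : ∀ n, a n ≤ x := fun n => le_ciSup hbdd n
      have hxb : ∀ n, x ≤ b n := by
        intro n
        apply ciSup_le
        intro k
        rcases le_total k n with hkn | hnk
        · exact (hamono hkn).trans (hab n)
        · exact (hab k).trans (hbanti hnk)
      refine ⟨x, ?_⟩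
      by_contra hne
      have hpos : 0 < |H x - y| := abs_pos.2 (sub_ne_zero.2 hne)
      obtain ⟨N, hN⟩ := meshF _ hpos
      have e1 : H (a N) = Finv F N ((mseq N : ℝ)) := hHpart N (mseq N)
      have e2 : H (b N) = Finv F N ((mseq N : ℝ) + 1) := by
        have := hHpart N (mseq N + 1)
        rwa [show ((mseq N + 1 : ℤ) : ℝ) = (mseq N : ℝ) + 1 by push_cast; ring] at this
      have c1 := hHmono (hxa N)
      rw [e1] at c1
      have c2 := hHmono (hxb N)
      rw [e2] at c2
      have d1 : Finv F N ((mseq N : ℝ)) ≤ y := by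
        have h1 := (CEaux.Finv_strictMono hFmono hFbij N).monotone (hyl N)
        rwa [CEaux.Finv_left hFbij] at h1
      have d2 : y ≤ Finv F N ((mseq N : ℝ) + 1) := by
        have h1 := (CEaux.Finv_strictMono hFmono hFbij N).monotone (hyu N).le
        rwa [CEaux.Finv_left hFbij] at h1
      have hw := hN N le_rfl (mseq N)
      have habs : |H x - y| ≤ Finv F N ((mseq N : ℝ) + 1) - Finv F N ((mseq N : ℝ)) :=
        abs_sub_le_iff.2 ⟨by linarith, by linarith⟩
      linarith
    exact ⟨H, hHsm, ⟨hHsm.injective, hHsurj⟩, hHper, hHconj⟩
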